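/- arXiv:1803.04673 — 5 statements merged into one kernel-verified Lean document; each statement's English description precedes it below -/
import Mathlib

section
/- Let x* ∈ X*. Assume U is nonempty and there exists x̄ ∈ X with p(x̄) ∈ ℝ (i.e., dom p ≠ ∅). Then the following statements are equivalent: (i) p*(x*) = q(x*) (robust duality holds at x*); (ii) for every ε ≥ 0, (M^ε p)(x*) = S^ε(x*); (iii) there exists ε̄ > 0 such that (M^ε p)(x*) = S^ε(x*) for all ε ∈ (0, ε̄). -/
noncomputable section

namespace RobustDuality

/-- The set of `ε`-minimizers of an extended-real-valued function `h`:
`{z | h z ∈ ℝ ∧ h z ≤ inf h + ε}` (empty when `inf h ∉ ℝ`). -/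
def epsArgmin {Z : Type*} (h : Z → EReal) (ε : ℝ) : Set Z :=
  {z | (∃ r : ℝ, h z = (r : EReal)) ∧ h z ≤ (⨅ w, h w) + (ε : EReal)}

variable {X : Type*} [AddCommGroup X] [Module ℝ X] [TopologicalSpace X]
  [IsTopologicalAddGroup X] [ContinuousSMul ℝ X] [LocallyConvexSpace ℝ X] [T2Space X]

/-- `(M^ε h)(x*) := ε-argmin (h - x*)` for `h : X → EReal` and `x* ∈ X*`. -/
def M1 (h : X → EReal) (ε : ℝ) (xs : X →L[ℝ] ℝ) : Set X :=
  epsArgmin (fun x => h x - ((xs x : ℝ) : EReal)) ε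

/-- Fenchel conjugate of `h : X → EReal`. -/
def conj1 (h : X → EReal) (xs : X →L[ℝ] ℝ) : EReal :=
  ⨆ x : X, ((xs x : ℝ) : EReal) - h x

/-- `ε`-subdifferential of `h : X → EReal` at `a`. -/
def epsSubdiff1 (h : X → EReal) (ε : ℝ) (a : X) : Set (X →L[ℝ] ℝ) :=
  {xs | (∃ r : ℝ, h a = (r : EReal)) ∧
    ∀ x, h a + ((xs x - xs a - ε : ℝ) : EReal) ≤ h x}

section Pair

variable {Yu : Type*} [AddCommGroup Yu] [Module ℝ Yu] [TopologicalSpace Yu]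
  [IsTopologicalAddGroup Yu] [ContinuousSMul ℝ Yu] [LocallyConvexSpace ℝ Yu] [T2Space Yu]

/-- Fenchel conjugate of `F : X × Y → EReal` at `(x*, y*)`. -/
def conj2 (F : X × Yu → EReal) (xs : X →L[ℝ] ℝ) (ys : Yu →L[ℝ] ℝ) : EReal :=
  ⨆ z : X × Yu, ((xs z.1 + ys z.2 : ℝ) : EReal) - F z

/-- `(M^ε F)(x*, y*) := ε-argmin (F - (x*, y*))`. -/
def M2 (F : X × Yu → EReal) (ε : ℝ) (xs : X →L[ℝ] ℝ) (ys : Yu →L[ℝ] ℝ) : Set (X × Yu) :=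
  epsArgmin (fun z => F z - ((xs z.1 + ys z.2 : ℝ) : EReal)) ε

/-- `ε`-subdifferential of `F : X × Y → EReal` at `a`, as a set of dual pairs. -/
def epsSubdiff2 (F : X × Yu → EReal) (ε : ℝ) (a : X × Yu) :
    Set ((X →L[ℝ] ℝ) × (Yu →L[ℝ] ℝ)) :=
  {zs | (∃ r : ℝ, F a = (r : EReal)) ∧
    ∀ z, F a + ((zs.1 z.1 + zs.2 z.2 - zs.1 a.1 - zs.2 a.2 - ε : ℝ) : EReal) ≤ F z}

end Pair

variable {U : Type*} {Y : U → Type*} [∀ u, AddCommGroup (Y u)] [∀ u, Module ℝ (Y u)]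
  [∀ u, TopologicalSpace (Y u)] [∀ u, IsTopologicalAddGroup (Y u)]
  [∀ u, ContinuousSMul ℝ (Y u)] [∀ u, LocallyConvexSpace ℝ (Y u)] [∀ u, T2Space (Y u)]

/-- The robust objective `p := sup_{u ∈ U} F_u (·, 0_u)`. -/
def pRob (F : ∀ u, X × Y u → EReal) (x : X) : EReal := ⨆ u, F u (x, 0)

/-- `q := inf over u ∈ U and y* ∈ Y_u* of F_u*(·, y*)`. -/
def qRob (F : ∀ u, X × Y u → EReal) (xs : X →L[ℝ] ℝ) : EReal :=
  ⨅ (u : U) (ys : Y u →L[ℝ] ℝ), conj2 (F u) xs ys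

/-- `S^ε(x*) := {x : p x ∈ ℝ ∧ p x - ⟨x*, x⟩ ≤ -q x* + ε}`. -/
def Sset (F : ∀ u, X × Y u → EReal) (ε : ℝ) (xs : X →L[ℝ] ℝ) : Set X :=
  {x | (∃ r : ℝ, pRob F x = (r : EReal)) ∧
    pRob F x - ((xs x : ℝ) : EReal) ≤ -qRob F xs + (ε : EReal)}

/-- `J^ε(u) := {x : p x ∈ ℝ ∧ p x ≤ F_u(x, 0) + ε}`. -/
def Jset (F : ∀ u, X × Y u → EReal) (ε : ℝ) (u : U) : Set X :=
  {x | (∃ r : ℝ, pRob F x = (r : EReal)) ∧ pRob F x ≤ F u (x, 0) + (ε : EReal)}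

/-- `A^{(ε₁,ε₂)}_{(u,y*)}(x*) := {x ∈ J^{ε₁}(u) : (x, 0) ∈ (M^{ε₂}F_u)(x*, y*)}`. -/
def Aset (F : ∀ u, X × Y u → EReal) (ε₁ ε₂ : ℝ) (u : U) (ys : Y u →L[ℝ] ℝ)
    (xs : X →L[ℝ] ℝ) : Set X :=
  {x | x ∈ Jset F ε₁ u ∧ (x, (0 : Y u)) ∈ M2 (F u) ε₂ xs ys}

/-- `𝒜^ε(x*)`. -/
def calA (F : ∀ u, X × Y u → EReal) (ε : ℝ) (xs : X →L[ℝ] ℝ) : Set X :=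
  ⋂ (η : ℝ) (_ : 0 < η),
    ⋃ (u : U) (ys : Y u →L[ℝ] ℝ) (ε₁ : ℝ) (ε₂ : ℝ)
      (_ : 0 ≤ ε₁) (_ : 0 ≤ ε₂) (_ : ε₁ + ε₂ = ε + η), Aset F ε₁ ε₂ u ys xs

/-- `B^ε_{(u,y*)}(x*)`. -/
def Bset (F : ∀ u, X × Y u → EReal) (ε : ℝ) (u : U) (ys : Y u →L[ℝ] ℝ)
    (xs : X →L[ℝ] ℝ) : Set X :=
  ⋃ (ε₁ : ℝ) (ε₂ : ℝ) (_ : 0 ≤ ε₁) (_ : 0 ≤ ε₂) (_ : ε₁ + ε₂ = ε),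
    Aset F ε₁ ε₂ u ys xs

/-- `B^ε(x*) := ⋃_{u, y*} B^ε_{(u,y*)}(x*)`. -/
def BsetAll (F : ∀ u, X × Y u → EReal) (ε : ℝ) (xs : X →L[ℝ] ℝ) : Set X :=
  ⋃ (u : U) (ys : Y u →L[ℝ] ℝ), Bset F ε u ys xs

/-- `I^ε(x)`: the set of `ε`-active indices at `x`. -/
def Iset (F : ∀ u, X × Y u → EReal) (ε : ℝ) (x : X) : Set U :=
  {u | (∃ r : ℝ, pRob F x = (r : EReal)) ∧ pRob F x - (ε : EReal) ≤ F u (x, 0)}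

/-- `C^ε(x)`. -/
def Cset (F : ∀ u, X × Y u → EReal) (ε : ℝ) (x : X) : Set (X →L[ℝ] ℝ) :=
  ⋂ (η : ℝ) (_ : 0 < η),
    ⋃ (ε₁ : ℝ) (ε₂ : ℝ) (_ : 0 ≤ ε₁) (_ : 0 ≤ ε₂) (_ : ε₁ + ε₂ = ε + η)
      (u : U) (_ : u ∈ Iset F ε₁ x),
      Prod.fst '' epsSubdiff2 (F u) ε₂ (x, (0 : Y u))

/-- `D^ε(x)`. -/
def Dset (F : ∀ u, X × Y u → EReal) (ε : ℝ) (x : X) : Set (X →L[ℝ] ℝ) :=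
  ⋃ (ε₁ : ℝ) (ε₂ : ℝ) (_ : 0 ≤ ε₁) (_ : 0 ≤ ε₂) (_ : ε₁ + ε₂ = ε)
    (u : U) (_ : u ∈ Iset F ε₁ x),
    Prod.fst '' epsSubdiff2 (F u) ε₂ (x, (0 : Y u))

/-- The exact active index set `I(x) := {u : F_u(x,0) = p(x)}` (when `p(x) ∈ ℝ`). -/
def I0set (F : ∀ u, X × Y u → EReal) (x : X) : Set U :=
  {u | (∃ r : ℝ, pRob F x = (r : EReal)) ∧ F u (x, 0) = pRob F x}

/-- `D(x) := ⋃_{u ∈ I(x)} proj_{X*} ∂F_u(x, 0)`. -/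
def D0set (F : ∀ u, X × Y u → EReal) (x : X) : Set (X →L[ℝ] ℝ) :=
  ⋃ (u : U) (_ : u ∈ I0set F x), Prod.fst '' epsSubdiff2 (F u) 0 (x, (0 : Y u))

/-- `B_{(u,y*)}(x*) := {x ∈ J(u) : (x, 0) ∈ (M F_u)(x*, y*)}`. -/
def B0set (F : ∀ u, X × Y u → EReal) (u : U) (ys : Y u →L[ℝ] ℝ)
    (xs : X →L[ℝ] ℝ) : Set X :=
  {x | (∃ r : ℝ, pRob F x = (r : EReal)) ∧ F u (x, 0) = pRob F x ∧
    (x, (0 : Y u)) ∈ M2 (F u) 0 xs ys}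


private lemma aux_neg_iSup {ι : Sort*} (f : ι → EReal) : -⨆ i, f i = ⨅ i, -f i := by
  apply le_antisymm
  · exact le_iInf fun i => EReal.neg_le_neg_iff.2 (le_iSup f i)
  · apply EReal.le_neg_of_le_neg
    exact iSup_le fun i => EReal.le_neg_of_le_neg (iInf_le _ i)

private lemma aux_sub_coe (a : EReal) (r : ℝ) : -((r : EReal) - a) = a - (r : EReal) := by
  induction a using EReal.rec with
  | bot => simp
  | top => simp
  | coe a => norm_cast; ring

private lemma aux_exists_real (a : EReal) (h1 : a ≠ ⊥) (h2 : a ≠ ⊤) : ∃ r : ℝ, a = (r : EReal) := by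
  induction a using EReal.rec with
  | bot => simp at h1
  | top => simp at h2
  | coe a => exact ⟨a, rfl⟩

private lemma aux_sub_ne_bot {a : EReal} (h : a ≠ ⊥) (r : ℝ) : a - (r : EReal) ≠ ⊥ := by
  induction a using EReal.rec with
  | bot => simp at h
  | top => simp
  | coe a => rw [← EReal.coe_sub]; exact EReal.coe_ne_bot _

private lemma aux_real_sub_iff (a : EReal) (r : ℝ) (ha : a ≠ ⊥) :
    (∃ s : ℝ, a - (r : EReal) = (s : EReal)) ↔ (∃ s : ℝ, a = (s : EReal)) := by
  induction a using EReal.rec with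
  | bot => simp at ha
  | top =>
      constructor
      · rintro ⟨s, hs⟩; rw [EReal.top_sub_coe] at hs; exact absurd hs.symm (EReal.coe_ne_top s)
      · rintro ⟨s, hs⟩; exact absurd hs.symm (EReal.coe_ne_top s)
  | coe a =>
      refine ⟨fun _ => ⟨a, rfl⟩, fun _ => ⟨a - r, ?_⟩⟩
      norm_cast

/-- Lemma 3.1 (robust duality at `x*` via the sets `S^ε`). -/
theorem robust_duality_iff_M_eq_S
    (F : ∀ u, X × Y u → EReal) (hU : Nonempty U) (hF : ∀ u z, F u z ≠ ⊥)
    (hdomp : ∃ xbar : X, ∃ r : ℝ, pRob F xbar = (r : EReal)) (xs : X →L[ℝ] ℝ) :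
    List.TFAE
      [conj1 (pRob F) xs = qRob F xs,
       ∀ ε : ℝ, 0 ≤ ε → M1 (pRob F) ε xs = Sset F ε xs,
       ∃ εbar : ℝ, 0 < εbar ∧
         ∀ ε : ℝ, 0 < ε → ε < εbar → M1 (pRob F) ε xs = Sset F ε xs] := by
  -- basic facts
  have hp_bot : ∀ x : X, pRob F x ≠ ⊥ := by
    intro x hx
    obtain ⟨u⟩ := hU
    exact hF u (x, 0) (le_bot_iff.mp (hx ▸ le_iSup (fun u => F u (x, 0)) u))
  have hinf : (⨅ w : X, (pRob F w - ((xs w : ℝ) : EReal))) = -conj1 (pRob F) xs := by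
    rw [conj1, aux_neg_iSup]
    exact iInf_congr fun w => (aux_sub_coe _ _).symm
  have hMx : ∀ (ε : ℝ) (x : X), x ∈ M1 (pRob F) ε xs ↔
      ((∃ r : ℝ, pRob F x = (r : EReal)) ∧
        pRob F x - ((xs x : ℝ) : EReal) ≤ -conj1 (pRob F) xs + (ε : EReal)) := by
    intro ε x
    simp only [M1, epsArgmin, Set.mem_setOf_eq]
    rw [hinf, aux_real_sub_iff _ _ (hp_bot x)]
  -- weak duality
  have hcq : conj1 (pRob F) xs ≤ qRob F xs := by
    rw [qRob]
    refine le_iInf fun u => le_iInf fun ys => ?_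
    rw [conj1, conj2]
    refine iSup_le fun x => ?_
    calc ((xs x : ℝ) : EReal) - pRob F x
        ≤ ((xs x : ℝ) : EReal) - F u (x, 0) :=
          EReal.sub_le_sub le_rfl (le_iSup (fun u => F u (x, 0)) u)
      _ = ((xs x + ys 0 : ℝ) : EReal) - F u (x, 0) := by rw [map_zero, add_zero]
      _ ≤ ⨆ z : X × Y u, ((xs z.1 + ys z.2 : ℝ) : EReal) - F u z :=
          le_iSup (fun z : X × Y u => ((xs z.1 + ys z.2 : ℝ) : EReal) - F u z) (x, (0 : Y u))
  have hc_bot : conj1 (pRob F) xs ≠ ⊥ := by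
    obtain ⟨xb, rb, hrb⟩ := hdomp
    have hle : ((xs xb - rb : ℝ) : EReal) ≤ conj1 (pRob F) xs := by
      have := le_iSup (fun x => ((xs x : ℝ) : EReal) - pRob F x) xb
      rw [hrb] at this
      rw [conj1]
      exact le_trans (by norm_cast) this
    intro hb
    rw [hb, le_bot_iff] at hle
    exact (EReal.coe_ne_bot _) hle
  tfae_have 1 → 2
  | h, ε, hε => by
    ext x
    rw [hMx ε x]
    simp only [Sset, Set.mem_setOf_eq, h]
  tfae_have 2 → 3
  | h => ⟨1, one_pos, fun ε hε _ => h ε hε.le⟩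
  tfae_have 3 → 1
  | ⟨εb, hεb, h⟩ => by
    by_cases hc_top : conj1 (pRob F) xs = ⊤
    · rw [hc_top]; exact (top_le_iff.mp (hc_top ▸ hcq)).symm
    obtain ⟨cr, hcr⟩ := aux_exists_real _ hc_bot hc_top
    have key : ∀ ε : ℝ, 0 < ε → ε < εb →
        ((-cr : ℝ) : EReal) ≤ -qRob F xs + (ε : EReal) := by
      intro ε hε hεlt
      have hlt : (⨅ w : X, (pRob F w - ((xs w : ℝ) : EReal))) < ((-cr + ε : ℝ) : EReal) := by
        rw [hinf, hcr]
        norm_cast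
        linarith
      obtain ⟨x, hx⟩ := iInf_lt_iff.mp hlt
      have hxM : x ∈ M1 (pRob F) ε xs := by
        rw [hMx ε x]
        constructor
        · exact (aux_real_sub_iff _ _ (hp_bot x)).mp
            (aux_exists_real _ (aux_sub_ne_bot (hp_bot x) _) (ne_top_of_lt hx))
        · rw [hcr]
          refine le_of_lt (lt_of_lt_of_le hx ?_)
          norm_cast
      rw [h ε hε hεlt] at hxM
      have h2 := hxM.2
      refine le_trans ?_ h2
      have : ((-cr : ℝ) : EReal) ≤ ⨅ w : X, (pRob F w - ((xs w : ℝ) : EReal)) := by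
        rw [hinf, hcr]; norm_cast
      exact le_trans this (iInf_le _ x)
    have hQbot : qRob F xs ≠ ⊥ := by
      intro hb
      rw [hb, le_bot_iff, hcr] at hcq
      exact (EReal.coe_ne_bot _) hcq
    have hQtop : qRob F xs ≠ ⊤ := by
      intro ht
      have := key (εb / 2) (by linarith) (by linarith)
      rw [ht] at this
      simp only [EReal.neg_top, EReal.bot_add, le_bot_iff] at this
      exact (EReal.coe_ne_bot _) this
    obtain ⟨qr, hqr⟩ := aux_exists_real _ hQbot hQtop
    have hkey2 : ∀ ε : ℝ, 0 < ε → ε < εb → qr ≤ cr + ε := by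
      intro ε h1 h2
      have hk := key ε h1 h2
      rw [hqr] at hk
      have hk2 : ((-cr : ℝ) : EReal) ≤ ((-qr + ε : ℝ) : EReal) := by
        refine le_trans hk (le_of_eq ?_)
        norm_cast
      have := EReal.coe_le_coe_iff.mp hk2
      linarith
    have hcrqr : cr ≤ qr := by
      have := hcq
      rw [hcr, hqr] at this
      exact_mod_cast this
    have hqrcr : qr ≤ cr := by
      by_contra hlt
      push_neg at hlt
      have hq := hkey2 (min (εb / 2) ((qr - cr) / 2))
        (lt_min (by linarith) (by linarith)) (lt_of_le_of_lt (min_le_left _ _) (by linarith))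
      have := min_le_right (εb / 2) ((qr - cr) / 2)
      linarith
    rw [hcr, hqr]
    norm_cast
    linarith
  tfae_finish

end RobustDuality
end
end

section
/- Assume dom F_u ≠ ∅ for every u ∈ U. Then for every x* ∈ X*, every ε ≥ 0 and every η > 0, S^ε(x*) is contained in the union, over all u ∈ U, y_u* ∈ Y_u* and all ε₁, ε₂ ≥ 0 with ε₁ + ε₂ = ε + η, of the sets A^{(ε₁,ε₂)}_{(u,y_u*)}(x*). -/
noncomputable section

namespace RobustDuality

variable {X : Type*} [AddCommGroup X] [Module ℝ X] [TopologicalSpace X]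
  [IsTopologicalAddGroup X] [ContinuousSMul ℝ X] [LocallyConvexSpace ℝ X] [T2Space X]

variable {U : Type*} {Y : U → Type*} [∀ u, AddCommGroup (Y u)] [∀ u, Module ℝ (Y u)]
  [∀ u, TopologicalSpace (Y u)] [∀ u, IsTopologicalAddGroup (Y u)]
  [∀ u, ContinuousSMul ℝ (Y u)] [∀ u, LocallyConvexSpace ℝ (Y u)] [∀ u, T2Space (Y u)]

lemma flip_sub (t C : ℝ) (b : EReal) (hb : b ≠ ⊥) (h : (t : EReal) - b ≤ (C : EReal)) :
    ((-C : ℝ) : EReal) ≤ b - (t : EReal) := by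
  induction b using EReal.rec with
  | bot => exact absurd rfl hb
  | coe b =>
    rw [← EReal.coe_sub, EReal.coe_le_coe_iff] at h
    rw [← EReal.coe_sub, EReal.coe_le_coe_iff]
    linarith
  | top => rw [EReal.top_sub_coe]; exact le_top

/-- Lemma 3.3: under `dom F_u ≠ ∅` for all `u`, `S^ε(x*)` is covered by the sets
`A^{(ε₁,ε₂)}_{(u,y*)}(x*)` with `ε₁ + ε₂ = ε + η`. -/
theorem Sset_subset_iUnion_Aset
    (F : ∀ u, X × Y u → EReal) (hU : Nonempty U) (hF : ∀ u z, F u z ≠ ⊥)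
    (hdomF : ∀ u, ∃ z : X × Y u, F u z ≠ ⊤)
    (xs : X →L[ℝ] ℝ) (ε : ℝ) (hε : 0 ≤ ε) (η : ℝ) (hη : 0 < η) :
    Sset F ε xs ⊆
      ⋃ (u : U) (ys : Y u →L[ℝ] ℝ) (ε₁ : ℝ) (ε₂ : ℝ)
        (_ : 0 ≤ ε₁) (_ : 0 ≤ ε₂) (_ : ε₁ + ε₂ = ε + η),
        Aset F ε₁ ε₂ u ys xs := by
  intro x hx
  obtain ⟨⟨r, hr⟩, hS⟩ := hx
  set q := qRob F xs with hq
  -- q is not ⊤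
  have hq_ne_top : q ≠ ⊤ := by
    intro h
    rw [hr, h, EReal.neg_top, EReal.bot_add, ← EReal.coe_sub, le_bot_iff] at hS
    exact EReal.coe_ne_bot _ hS
  -- q is not ⊥ : q ≥ xs x - r
  have hq_lb : ((xs x - r : ℝ) : EReal) ≤ q := by
    rw [hq, qRob]
    apply le_iInf; intro u; apply le_iInf; intro ys
    have h1 : F u (x, 0) ≤ (r : EReal) := hr ▸ le_iSup (fun u => F u (x, 0)) u
    have h2 : ((xs x + ys 0 : ℝ) : EReal) - F u (x, 0) ≤ conj2 (F u) xs ys :=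
      le_iSup (fun z : X × Y u => ((xs z.1 + ys z.2 : ℝ) : EReal) - F u z) (x, (0 : Y u))
    refine le_trans ?_ h2
    rw [map_zero, add_zero]
    calc ((xs x - r : ℝ) : EReal) = ((xs x : ℝ) : EReal) - (r : EReal) := by
          rw [← EReal.coe_sub]
      _ ≤ ((xs x : ℝ) : EReal) - F u (x, 0) := EReal.sub_le_sub le_rfl h1
  have hq_ne_bot : q ≠ ⊥ := fun h => by
    rw [h, le_bot_iff] at hq_lb
    exact EReal.coe_ne_bot _ hq_lb
  set Q := q.toReal with hQdef
  have hQ : q = (Q : EReal) := (EReal.coe_toReal hq_ne_top hq_ne_bot).symm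
  -- the basic inequality in ℝ
  have hrQ : r - xs x ≤ -Q + ε := by
    rw [hr, hQ] at hS
    rw [← EReal.coe_neg, ← EReal.coe_add, ← EReal.coe_sub, EReal.coe_le_coe_iff] at hS
    exact hS
  -- pick u, ys with conj2 < Q + η
  have hlt : q < ((Q + η : ℝ) : EReal) := by
    rw [hQ, EReal.coe_lt_coe_iff]; linarith
  rw [hq, qRob] at hlt
  obtain ⟨u, hu⟩ := iInf_lt_iff.mp hlt
  obtain ⟨ys, hys⟩ := iInf_lt_iff.mp hu
  set c := conj2 (F u) xs ys with hcdef
  have hqc : q ≤ c := by rw [hq, qRob]; exact iInf_le_of_le u (iInf_le _ ys)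
  have hc_ne_bot : c ≠ ⊥ := fun h => by rw [h, le_bot_iff] at hqc; exact hq_ne_bot hqc
  have hc_ne_top : c ≠ ⊤ := fun h => by rw [h] at hys; exact absurd hys (by simp)
  set C := c.toReal with hCdef
  have hC : c = (C : EReal) := (EReal.coe_toReal hc_ne_top hc_ne_bot).symm
  have hQC : Q ≤ C := by rw [hQ, hC, EReal.coe_le_coe_iff] at hqc; exact hqc
  have hCQη : C < Q + η := by rw [hC, EReal.coe_lt_coe_iff] at hys; exact hys
  -- F u (x,0) is real
  have hFle : F u (x, 0) ≤ (r : EReal) := hr ▸ le_iSup (fun u => F u (x, 0)) u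
  have hF_ne_top : F u (x, 0) ≠ ⊤ := fun h => by
    rw [h, top_le_iff] at hFle; exact EReal.coe_ne_top r hFle
  set a := (F u (x, 0)).toReal with hadef
  have ha : F u (x, 0) = (a : EReal) := (EReal.coe_toReal hF_ne_top (hF u (x, 0))).symm
  have har : a ≤ r := by rw [ha, EReal.coe_le_coe_iff] at hFle; exact hFle
  -- Young's inequality at (x,0): xs x - a ≤ C
  have hYoung : xs x - a ≤ C := by
    have h2 : ((xs x + ys 0 : ℝ) : EReal) - F u (x, 0) ≤ c :=
      le_iSup (fun z : X × Y u => ((xs z.1 + ys z.2 : ℝ) : EReal) - F u z) (x, (0 : Y u))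
    rw [map_zero, add_zero, ha, hC, ← EReal.coe_sub, EReal.coe_le_coe_iff] at h2
    exact h2
  set ε₂ := a - xs x + C with hε₂def
  set ε₁ := ε + η - ε₂ with hε₁def
  have hε₂ : 0 ≤ ε₂ := by simp only [hε₂def]; linarith
  have hε₁ : 0 ≤ ε₁ := by simp only [hε₁def, hε₂def]; linarith
  simp only [Set.mem_iUnion]
  refine ⟨u, ys, ε₁, ε₂, hε₁, hε₂, by ring, ?_, ?_⟩
  · -- x ∈ Jset F ε₁ u
    refine ⟨⟨r, hr⟩, ?_⟩
    rw [hr, ha, ← EReal.coe_add, EReal.coe_le_coe_iff]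
    simp only [hε₁def, hε₂def]; linarith
  · -- (x, 0) ∈ M2 (F u) ε₂ xs ys
    have hval : F u (x, 0) - ((xs x + ys (0 : Y u) : ℝ) : EReal) = ((a - xs x : ℝ) : EReal) := by
      rw [ha, map_zero, add_zero, ← EReal.coe_sub]
    constructor
    · exact ⟨a - xs x, hval⟩
    · show F u (x, 0) - ((xs x + ys (0 : Y u) : ℝ) : EReal) ≤
          (⨅ z : X × Y u, F u z - ((xs z.1 + ys z.2 : ℝ) : EReal)) + (ε₂ : EReal)
      rw [hval]
      have hinf : ((-C : ℝ) : EReal) ≤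
          ⨅ z : X × Y u, F u z - ((xs z.1 + ys z.2 : ℝ) : EReal) := by
        apply le_iInf; intro z
        apply flip_sub _ _ _ (hF u z)
        calc ((xs z.1 + ys z.2 : ℝ) : EReal) - F u z ≤ c :=
              le_iSup (fun z : X × Y u => ((xs z.1 + ys z.2 : ℝ) : EReal) - F u z) z
          _ = (C : EReal) := hC
      calc ((a - xs x : ℝ) : EReal) = ((-C : ℝ) : EReal) + (ε₂ : EReal) := by
            rw [← EReal.coe_add]; norm_cast; simp only [hε₂def]; ring
        _ ≤ (⨅ z : X × Y u, F u z - ((xs z.1 + ys z.2 : ℝ) : EReal)) + (ε₂ : EReal) :=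
            add_le_add_left hinf _

end RobustDuality
end
end

section
/- Let (f_u)_{u∈U} be a family of functions f_u : X → ℝ ∪ {+∞} with U nonempty, let p := sup_{u∈U} f_u, and assume dom p ≠ ∅. Then for each x* ∈ X*, the duality formula (sup_{u∈U} f_u)*(x*) = inf_{u∈U} f_u*(x*) holds if and only if (M^ε p)(x*) = 𝒜^ε(x*) for all ε ≥ 0, and also if and only if there exists ε̄ > 0 with (M^ε p)(x*) = 𝒜^ε(x*) for all ε ∈ (0, ε̄), where 𝒜^ε(x*) := ⋂_{η>0} ⋃_{u∈U} ⋃_{ε₁,ε₂≥0, ε₁+ε₂=ε+η} (J^{ε₁}(u) ∩ (M^{ε₂}f_u)(x*)) and J^{ε₁}(u) := {x ∈ X : p(x) ∈ ℝ and f_u(x) ≥ p(x) − ε₁}. -/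
noncomputable section

namespace RobustDuality

variable {X : Type*} [AddCommGroup X] [Module ℝ X] [TopologicalSpace X]
  [IsTopologicalAddGroup X] [ContinuousSMul ℝ X] [LocallyConvexSpace ℝ X] [T2Space X]

variable {U : Type*}

/-- `p := sup_{u ∈ U} f_u`. -/
def pSup (f : U → X → EReal) (x : X) : EReal := ⨆ u, f u x

/-- `J^ε(u) := {x : p x ∈ ℝ ∧ f_u x ≥ p x - ε}`. -/
def J2set (f : U → X → EReal) (ε : ℝ) (u : U) : Set X :=
  {x | (∃ r : ℝ, pSup f x = (r : EReal)) ∧ pSup f x - (ε : EReal) ≤ f u x}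

/-- `𝒜^ε(x*)` for the non-perturbation case. -/
def calA2 (f : U → X → EReal) (ε : ℝ) (xs : X →L[ℝ] ℝ) : Set X :=
  ⋂ (η : ℝ) (_ : 0 < η),
    ⋃ (u : U) (ε₁ : ℝ) (ε₂ : ℝ) (_ : 0 ≤ ε₁) (_ : 0 ≤ ε₂) (_ : ε₁ + ε₂ = ε + η),
      J2set f ε₁ u ∩ M1 (f u) ε₂ xs

/-- `B^ε_u(x*)` for the non-perturbation case. -/
def B2set (f : U → X → EReal) (ε : ℝ) (u : U) (xs : X →L[ℝ] ℝ) : Set X :=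
  ⋃ (ε₁ : ℝ) (ε₂ : ℝ) (_ : 0 ≤ ε₁) (_ : 0 ≤ ε₂) (_ : ε₁ + ε₂ = ε),
    J2set f ε₁ u ∩ M1 (f u) ε₂ xs

/-- `I^ε(x) := {u : f_u x ≥ p x - ε}` (when `p x ∈ ℝ`). -/
def I2set (f : U → X → EReal) (ε : ℝ) (x : X) : Set U :=
  {u | (∃ r : ℝ, pSup f x = (r : EReal)) ∧ pSup f x - (ε : EReal) ≤ f u x}

/-- `C^ε(x)` for the non-perturbation case. -/
def C2set (f : U → X → EReal) (ε : ℝ) (x : X) : Set (X →L[ℝ] ℝ) :=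
  ⋂ (η : ℝ) (_ : 0 < η),
    ⋃ (ε₁ : ℝ) (ε₂ : ℝ) (_ : 0 ≤ ε₁) (_ : 0 ≤ ε₂) (_ : ε₁ + ε₂ = ε + η)
      (u : U) (_ : u ∈ I2set f ε₁ x), epsSubdiff1 (f u) ε₂ x

/-- `J(u) := {x : p x ∈ ℝ ∧ f_u x = p x}`. -/
def J02set (f : U → X → EReal) (u : U) : Set X :=
  {x | (∃ r : ℝ, pSup f x = (r : EReal)) ∧ f u x = pSup f x}

/-- `B_u(x*) := J(u) ∩ (M f_u)(x*)`. -/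
def B02set (f : U → X → EReal) (u : U) (xs : X →L[ℝ] ℝ) : Set X :=
  J02set f u ∩ M1 (f u) 0 xs


private lemma ereal_le_of_forall_le_add {a b : EReal}
    (h : ∀ η : ℝ, 0 < η → a ≤ b + (η : EReal)) : a ≤ b := by
  induction b using EReal.rec with
  | bot =>
      have h1 := h 1 one_pos
      simpa using h1
  | coe b =>
      induction a using EReal.rec with
      | bot => exact bot_le
      | coe a =>
          have : ∀ η : ℝ, 0 < η → a ≤ b + η := by
            intro η hη
            exact_mod_cast h η hη
          exact_mod_cast le_of_forall_pos_le_add this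
      | top =>
          have h1 := h 1 one_pos
          norm_cast at h1
  | top => exact le_top

private lemma exists_real_of {a : EReal} (h1 : a ≠ ⊥) (h2 : a ≠ ⊤) :
    ∃ r : ℝ, a = (r : EReal) :=
  ⟨a.toReal, (EReal.coe_toReal h2 h1).symm⟩

private lemma exists_real_sub_iff {a : EReal} (r : ℝ) :
    (∃ s : ℝ, a - (r : EReal) = (s : EReal)) ↔ ∃ s : ℝ, a = (s : EReal) := by
  induction a using EReal.rec with
  | bot => simp [EReal.bot_sub]
  | coe a =>
      constructor
      · intro _; exact ⟨a, rfl⟩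
      · intro _; exact ⟨a - r, by norm_cast⟩
  | top => simp [EReal.top_sub_coe]

private lemma ereal_neg_iInf {ι : Sort*} (g : ι → EReal) :
    (-⨅ i, g i) = ⨆ i, -g i := by
  apply le_antisymm
  · rw [EReal.neg_le]
    refine le_iInf fun i => ?_
    rw [EReal.neg_le]
    exact le_iSup (fun i => -g i) i
  · exact iSup_le fun i => EReal.neg_le_neg_iff.2 (iInf_le _ i)

private lemma ereal_iInf_neg {ι : Sort*} (g : ι → EReal) :
    (⨅ i, -g i) = -⨆ i, g i := by
  have h := ereal_neg_iInf (fun i => -g i)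
  simp only [neg_neg] at h
  rw [← h, neg_neg]

set_option linter.unusedSectionVars false in
private lemma conj1_eq_neg_iInf (h : X → EReal) (hb : ∀ x, h x ≠ ⊥) (xs : X →L[ℝ] ℝ) :
    conj1 h xs = - ⨅ x, (h x - ((xs x : ℝ) : EReal)) := by
  rw [ereal_neg_iInf]
  refine iSup_congr fun x => ?_
  rw [EReal.neg_sub (Or.inl (hb x)) (Or.inr (EReal.coe_ne_top _)), sub_eq_add_neg, add_comm]

/-- Corollary 3.2 (robust duality for Case 2: no linear perturbations). -/
theorem infSup_duality_iff_M_eq_calA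
    (f : U → X → EReal) (hU : Nonempty U) (hf : ∀ u x, f u x ≠ ⊥)
    (hdomp : ∃ x : X, pSup f x ≠ ⊤) (xs : X →L[ℝ] ℝ) :
    List.TFAE
      [conj1 (pSup f) xs = ⨅ u : U, conj1 (f u) xs,
       ∀ ε : ℝ, 0 ≤ ε → M1 (pSup f) ε xs = calA2 f ε xs,
       ∃ εbar : ℝ, 0 < εbar ∧
         ∀ ε : ℝ, 0 < ε → ε < εbar → M1 (pSup f) ε xs = calA2 f ε xs] := by
  classical
  set m : EReal := ⨅ x : X, (pSup f x - ((xs x : ℝ) : EReal)) with hm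
  set mu : U → EReal := fun u => ⨅ x : X, (f u x - ((xs x : ℝ) : EReal)) with hmu
  have hpne : ∀ x, pSup f x ≠ ⊥ := by
    intro x
    obtain ⟨u⟩ := hU
    exact ne_bot_of_le_ne_bot (hf u x) (le_iSup (fun u => f u x) u)
  have hfle : ∀ u x, f u x ≤ pSup f x := fun u x => le_iSup (fun u => f u x) u
  have hmum : ∀ u, mu u ≤ m :=
    fun u => iInf_mono fun x => EReal.sub_le_sub (hfle u x) le_rfl
  have hconjp : conj1 (pSup f) xs = -m := conj1_eq_neg_iInf _ hpne xs
  have hiff1 : (conj1 (pSup f) xs = ⨅ u : U, conj1 (f u) xs) ↔ m = ⨆ u, mu u := by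
    rw [hconjp]
    have : ∀ u, conj1 (f u) xs = -(mu u) := fun u => conj1_eq_neg_iInf _ (hf u) xs
    simp only [this]
    rw [ereal_iInf_neg, neg_inj]
  -- membership characterizations
  have hmemMp : ∀ (ε : ℝ) (x : X), x ∈ M1 (pSup f) ε xs ↔
      (∃ r : ℝ, pSup f x - ((xs x : ℝ) : EReal) = (r : EReal)) ∧
        pSup f x - ((xs x : ℝ) : EReal) ≤ m + (ε : EReal) := by
    intro ε x; rw [hm]; exact Iff.rfl
  have hmemMf : ∀ (u : U) (ε : ℝ) (x : X), x ∈ M1 (f u) ε xs ↔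
      (∃ r : ℝ, f u x - ((xs x : ℝ) : EReal) = (r : EReal)) ∧
        f u x - ((xs x : ℝ) : EReal) ≤ mu u + (ε : EReal) := by
    intro u ε x; rw [hmu]; exact Iff.rfl
  have hmemA : ∀ (ε : ℝ) (x : X), x ∈ calA2 f ε xs ↔
      ∀ η : ℝ, 0 < η → ∃ u : U, ∃ ε₁ ε₂ : ℝ, 0 ≤ ε₁ ∧ 0 ≤ ε₂ ∧ ε₁ + ε₂ = ε + η ∧
        x ∈ J2set f ε₁ u ∧ x ∈ M1 (f u) ε₂ xs := by
    intro ε x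
    simp only [calA2, Set.mem_iInter, Set.mem_iUnion, Set.mem_inter_iff]
    constructor
    · intro h η hη
      obtain ⟨u, ε₁, ε₂, h1, h2, h3, h4, h5⟩ := h η hη
      exact ⟨u, ε₁, ε₂, h1, h2, h3, h4, h5⟩
    · intro h η hη
      obtain ⟨u, ε₁, ε₂, h1, h2, h3, h4, h5⟩ := h η hη
      exact ⟨u, ε₁, ε₂, h1, h2, h3, h4, h5⟩
  -- the inclusion calA2 ⊆ M (always true)
  have hsub : ∀ ε : ℝ, 0 ≤ ε → calA2 f ε xs ⊆ M1 (pSup f) ε xs := by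
    intro ε hε x hx
    rw [hmemA] at hx
    -- first get that p x is real
    obtain ⟨u0, d1, d2, _, _, _, ⟨⟨a0, hpa0⟩, _⟩, _⟩ := hx 1 one_pos
    rw [hmemMp]
    refine ⟨⟨a0 - xs x, by rw [hpa0]; norm_cast⟩, ?_⟩
    refine ereal_le_of_forall_le_add fun η hη => ?_
    obtain ⟨u, ε₁, ε₂, h1, h2, h3, hJ, hM⟩ := hx η hη
    rw [hmemMf] at hM
    obtain ⟨⟨s, hs⟩, hMle⟩ := hM
    obtain ⟨c, hc⟩ := (exists_real_sub_iff (xs x)).1 ⟨s, hs⟩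
    obtain ⟨⟨a, hpa⟩, hJle⟩ := hJ
    -- mu u is real
    have hmu_lb : ((c - xs x - ε₂ : ℝ) : EReal) ≤ mu u := by
      have h' : ((c - xs x : ℝ) : EReal) ≤ mu u + (ε₂ : EReal) := by
        rw [hc] at hMle; exact_mod_cast hMle
      have h'' := EReal.sub_le_of_le_add h'
      rw [← EReal.coe_sub] at h''
      exact h'' 
    have hmu_ub : mu u ≤ ((a - xs x : ℝ) : EReal) := by
      have h0 : mu u ≤ f u x - ((xs x : ℝ) : EReal) := iInf_le _ x
      calc mu u ≤ f u x - ((xs x : ℝ) : EReal) := h0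
        _ ≤ pSup f x - ((xs x : ℝ) : EReal) := EReal.sub_le_sub (hfle u x) le_rfl
        _ = ((a - xs x : ℝ) : EReal) := by rw [hpa]; norm_cast
    have hmubne : mu u ≠ ⊥ := fun hb => by
      rw [hb] at hmu_lb; exact (EReal.bot_lt_coe _).not_ge hmu_lb
    have hmutne : mu u ≠ ⊤ := fun ht => by
      rw [ht] at hmu_ub; exact (EReal.coe_lt_top _).not_ge hmu_ub
    obtain ⟨ν, hν⟩ := exists_real_of hmubne hmutne
    -- m is real enough: mu u ≤ m
    have hmm : ((ν : ℝ) : EReal) ≤ m := hν ▸ hmum u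
    -- real inequalities
    have r1 : a - ε₁ ≤ c := by
      rw [hpa, hc] at hJle; exact_mod_cast hJle
    have r2 : c - xs x ≤ ν + ε₂ := by
      rw [hc, hν] at hMle; exact_mod_cast hMle
    have goal : ((a - xs x : ℝ) : EReal) ≤ ((ν + ε + η : ℝ) : EReal) := by
      norm_cast; linarith
    calc pSup f x - ((xs x : ℝ) : EReal) = ((a - xs x : ℝ) : EReal) := by
          rw [hpa]; norm_cast
      _ ≤ ((ν + ε + η : ℝ) : EReal) := goal
      _ = ((ν : ℝ) : EReal) + (ε : EReal) + (η : EReal) := by norm_cast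
      _ ≤ m + (ε : EReal) + (η : EReal) :=
          add_le_add (add_le_add hmm le_rfl) le_rfl
  -- 1 → 2
  have h12 : (conj1 (pSup f) xs = ⨅ u : U, conj1 (f u) xs) →
      ∀ ε : ℝ, 0 ≤ ε → M1 (pSup f) ε xs = calA2 f ε xs := by
    intro hdual ε hε
    have hsup : m = ⨆ u, mu u := hiff1.1 hdual
    refine Set.Subset.antisymm ?_ (hsub ε hε)
    intro x hx
    rw [hmemMp] at hx
    obtain ⟨⟨s, hs⟩, hxle⟩ := hx
    obtain ⟨a, hpa⟩ := (exists_real_sub_iff (xs x)).1 ⟨s, hs⟩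
    have hpxs : pSup f x - ((xs x : ℝ) : EReal) = ((a - xs x : ℝ) : EReal) := by
      rw [hpa]; norm_cast
    -- m is real
    have hmnb : m ≠ ⊥ := by
      intro hb
      rw [hb, hpxs] at hxle
      simp only [EReal.bot_add] at hxle
      exact (EReal.bot_lt_coe _).not_ge hxle
    have hmnt : m ≠ ⊤ := by
      intro ht
      have := iInf_le (fun y => pSup f y - ((xs y : ℝ) : EReal)) x
      rw [← hm, ht, hpxs] at this
      exact (EReal.coe_lt_top _).not_ge this
    obtain ⟨μ, hμ⟩ := exists_real_of hmnb hmnt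
    have hxleR : a - xs x ≤ μ + ε := by
      rw [hpxs, hμ] at hxle; exact_mod_cast hxle
    rw [hmemA]
    intro η hη
    -- pick u with mu u > m - η/2
    have hlt : ((μ - η / 2 : ℝ) : EReal) < ⨆ u, mu u := by
      rw [← hsup, hμ]; exact_mod_cast (by linarith : μ - η / 2 < μ)
    obtain ⟨u, hu⟩ := lt_iSup_iff.1 hlt
    have hmuub : mu u ≤ ((μ : ℝ) : EReal) := hμ ▸ hmum u
    have hmubne : mu u ≠ ⊥ := fun hb => by
      rw [hb] at hu; exact (EReal.bot_lt_coe _).not_gt hu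
    have hmutne : mu u ≠ ⊤ := fun ht => by
      rw [ht] at hmuub; exact (EReal.coe_lt_top _).not_ge hmuub
    obtain ⟨ν, hν⟩ := exists_real_of hmubne hmutne
    have huR : μ - η / 2 < ν := by rw [hν] at hu; exact_mod_cast hu
    -- f u x is real
    have hfub : f u x ≤ ((a : ℝ) : EReal) := hpa ▸ hfle u x
    have hfutne : f u x ≠ ⊤ := fun ht => by
      rw [ht] at hfub; exact (EReal.coe_lt_top _).not_ge hfub
    obtain ⟨c, hc⟩ := exists_real_of (hf u x) hfutne
    have hca : c ≤ a := by rw [hc] at hfub; exact_mod_cast hfub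
    have hνc : ν ≤ c - xs x := by
      have h0 : mu u ≤ f u x - ((xs x : ℝ) : EReal) := iInf_le _ x
      rw [hν, hc] at h0
      exact_mod_cast h0
    refine ⟨u, a - c, ε + η - (a - c), by linarith, by linarith, by ring, ?_, ?_⟩
    · exact ⟨⟨a, hpa⟩, by rw [hpa, hc]; exact_mod_cast (by linarith : a - (a - c) ≤ c)⟩
    · rw [hmemMf]
      refine ⟨⟨c - xs x, by rw [hc]; norm_cast⟩, ?_⟩
      rw [hc, hν]
      exact_mod_cast (by linarith : c - xs x ≤ ν + (ε + η - (a - c)))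
  -- 2 → 3
  have h23 : (∀ ε : ℝ, 0 ≤ ε → M1 (pSup f) ε xs = calA2 f ε xs) →
      ∃ εbar : ℝ, 0 < εbar ∧
        ∀ ε : ℝ, 0 < ε → ε < εbar → M1 (pSup f) ε xs = calA2 f ε xs :=
    fun h => ⟨1, one_pos, fun ε hε _ => h ε hε.le⟩
  -- 3 → 1
  have h31 : (∃ εbar : ℝ, 0 < εbar ∧
      ∀ ε : ℝ, 0 < ε → ε < εbar → M1 (pSup f) ε xs = calA2 f ε xs) →
      conj1 (pSup f) xs = ⨅ u : U, conj1 (f u) xs := by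
    rintro ⟨εbar, hεbar, heq⟩
    rw [hiff1]
    refine le_antisymm ?_ (iSup_le hmum)
    by_cases hmb : m = ⊥
    · rw [hmb]; exact bot_le
    -- m is real
    obtain ⟨x0, hx0⟩ := hdomp
    have hmnt : m ≠ ⊤ := by
      intro ht
      obtain ⟨a0, ha0⟩ := exists_real_of (hpne x0) hx0
      have := iInf_le (fun y => pSup f y - ((xs y : ℝ) : EReal)) x0
      rw [← hm, ht, ha0] at this
      have : (⊤ : EReal) ≤ ((a0 - xs x0 : ℝ) : EReal) := by
        refine le_trans this ?_; norm_cast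
      exact (EReal.coe_lt_top _).not_ge this
    obtain ⟨μ, hμ⟩ := exists_real_of hmb hmnt
    rw [hμ]
    refine ereal_le_of_forall_le_add fun δ hδ => ?_
    set ε : ℝ := min (εbar / 2) (δ / 2) with hεdef
    have hε0 : 0 < ε := lt_min (by linarith) (by linarith)
    have hεlt : ε < εbar := lt_of_le_of_lt (min_le_left _ _) (by linarith)
    have hεδ : ε + δ / 2 ≤ δ := by
      have := min_le_right (εbar / 2) (δ / 2)
      simp only [← hεdef] at this
      linarith
    -- find an ε-minimizer
    have hlt : m < ((μ + ε : ℝ) : EReal) := by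
      rw [hμ]; exact_mod_cast (by linarith : μ < μ + ε)
    rw [hm] at hlt
    obtain ⟨x, hxlt⟩ := iInf_lt_iff.1 hlt
    have hxge : ((μ : ℝ) : EReal) ≤ pSup f x - ((xs x : ℝ) : EReal) := by
      rw [← hμ, hm]; exact iInf_le _ x
    have hqne : pSup f x - ((xs x : ℝ) : EReal) ≠ ⊥ := fun hb => by
      rw [hb] at hxge; exact (EReal.bot_lt_coe _).not_ge hxge
    have hqnt : pSup f x - ((xs x : ℝ) : EReal) ≠ ⊤ := fun ht => by
      rw [ht] at hxlt; exact (EReal.coe_lt_top _).not_gt hxlt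
    obtain ⟨s, hsx⟩ := exists_real_of hqne hqnt
    obtain ⟨a, hpa⟩ := (exists_real_sub_iff (xs x)).1 ⟨s, hsx⟩
    have hpxs : pSup f x - ((xs x : ℝ) : EReal) = ((a - xs x : ℝ) : EReal) := by
      rw [hpa]; norm_cast
    have hxM : x ∈ M1 (pSup f) ε xs := by
      rw [hmemMp]
      refine ⟨⟨a - xs x, hpxs⟩, ?_⟩
      rw [hμ]
      calc pSup f x - ((xs x : ℝ) : EReal) ≤ ((μ + ε : ℝ) : EReal) := hxlt.le
        _ = ((μ : ℝ) : EReal) + (ε : EReal) := by norm_cast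
    rw [heq ε hε0 hεlt, hmemA] at hxM
    obtain ⟨u, ε₁, ε₂, h1, h2, h3, hJ, hM⟩ := hxM (δ / 2) (by linarith)
    rw [hmemMf] at hM
    obtain ⟨⟨t, ht⟩, hMle⟩ := hM
    obtain ⟨c, hc⟩ := (exists_real_sub_iff (xs x)).1 ⟨t, ht⟩
    obtain ⟨_, hJle⟩ := hJ
    have r1 : a - ε₁ ≤ c := by rw [hpa, hc] at hJle; exact_mod_cast hJle
    have r2 : μ ≤ a - xs x := by rw [hpxs] at hxge; exact_mod_cast hxge
    have hmu_lb : ((c - xs x - ε₂ : ℝ) : EReal) ≤ mu u := by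
      have h' : ((c - xs x : ℝ) : EReal) ≤ mu u + (ε₂ : EReal) := by
        rw [hc] at hMle; exact_mod_cast hMle
      have h'' := EReal.sub_le_of_le_add h'
      rw [← EReal.coe_sub] at h''
      exact h'' 
    have key : ((μ - δ : ℝ) : EReal) ≤ ⨆ u, mu u := by
      refine le_trans ?_ (le_trans hmu_lb (le_iSup mu u))
      exact_mod_cast (by linarith : μ - δ ≤ c - xs x - ε₂)
    calc ((μ : ℝ) : EReal) = ((μ - δ : ℝ) : EReal) + (δ : EReal) := by norm_cast; ring
      _ ≤ (⨆ u, mu u) + (δ : EReal) := add_le_add key le_rfl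
  tfae_have 1 → 2 := h12
  tfae_have 2 → 3 := h23
  tfae_have 3 → 1 := h31
  tfae_finish


end RobustDuality
end
end

section
/- Assume dom F_u ≠ ∅ for every u ∈ U, and let x* ∈ X* be such that the infimum defining q(x*) is attained, i.e., q(x*) = min over u ∈ U, y_u* ∈ Y_u* of F_u*(x*, y_u*). Then there exist u ∈ U and y_u* ∈ Y_u* such that S^ε(x*) = B^ε_{(u,y_u*)}(x*) for all ε ≥ 0. -/
noncomputable section

namespace RobustDuality

variable {X : Type*} [AddCommGroup X] [Module ℝ X] [TopologicalSpace X]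
  [IsTopologicalAddGroup X] [ContinuousSMul ℝ X] [LocallyConvexSpace ℝ X] [T2Space X]

variable {U : Type*} {Y : U → Type*} [∀ u, AddCommGroup (Y u)] [∀ u, Module ℝ (Y u)]
  [∀ u, TopologicalSpace (Y u)] [∀ u, IsTopologicalAddGroup (Y u)]
  [∀ u, ContinuousSMul ℝ (Y u)] [∀ u, LocallyConvexSpace ℝ (Y u)] [∀ u, T2Space (Y u)]

private lemma neg_iSup' {ι : Sort*} (f : ι → EReal) : (⨅ i, -f i) = -⨆ i, f i := by
  apply le_antisymm
  · exact EReal.le_neg_of_le_neg (iSup_le fun i => EReal.le_neg_of_le_neg (iInf_le _ i))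
  · exact le_iInf fun i => EReal.neg_le.mpr (by rw [neg_neg]; exact le_iSup f i)

private lemma sub_real_eq_neg (a : ℝ) {b : EReal} (hb : b ≠ ⊥) :
    b - (a : EReal) = -((a : EReal) - b) := by
  induction b using EReal.rec with
  | bot => exact absurd rfl hb
  | top => rw [sub_eq_add_neg, sub_eq_add_neg]; simp
  | coe c =>
    rw [← EReal.coe_sub, ← EReal.coe_sub, ← EReal.coe_neg]
    exact congrArg _ (by ring)

private lemma exists_real {b : EReal} (h1 : b ≠ ⊥) (h2 : b ≠ ⊤) : ∃ r : ℝ, b = r := by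
  induction b using EReal.rec with
  | bot => exact absurd rfl h1
  | top => exact absurd rfl h2
  | coe c => exact ⟨c, rfl⟩

section AuxPair

variable {Yu : Type*} [AddCommGroup Yu] [Module ℝ Yu] [TopologicalSpace Yu]
  [IsTopologicalAddGroup Yu] [ContinuousSMul ℝ Yu] [LocallyConvexSpace ℝ Yu] [T2Space Yu]

private lemma iInf_sub_eq_neg_conj2 (F : X × Yu → EReal) (hF : ∀ z, F z ≠ ⊥)
    (xs : X →L[ℝ] ℝ) (ys : Yu →L[ℝ] ℝ) :
    (⨅ z : X × Yu, F z - ((xs z.1 + ys z.2 : ℝ) : EReal)) = -conj2 F xs ys := by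
  rw [conj2, ← neg_iSup']
  exact iInf_congr fun z => sub_real_eq_neg _ (hF z)

end AuxPair

/-- Lemma 4.1: if the infimum defining `q(x*)` is attained then `S^ε(x*) = B^ε_{(u,y*)}(x*)`
for some `u, y*` and all `ε ≥ 0`. -/
theorem Sset_eq_Bset_of_q_attained
    (F : ∀ u, X × Y u → EReal) (hU : Nonempty U) (hF : ∀ u z, F u z ≠ ⊥)
    (hdomF : ∀ u, ∃ z : X × Y u, F u z ≠ ⊤) (xs : X →L[ℝ] ℝ)
    (hmin : ∃ (u : U) (ys : Y u →L[ℝ] ℝ), conj2 (F u) xs ys = qRob F xs) :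
    ∃ (u : U) (ys : Y u →L[ℝ] ℝ), ∀ ε : ℝ, 0 ≤ ε → Sset F ε xs = Bset F ε u ys xs := by
  obtain ⟨u, ys, hc⟩ := hmin
  refine ⟨u, ys, fun ε hε => ?_⟩
  set c : EReal := conj2 (F u) xs ys with hcdef
  have hInf : (⨅ z : X × Y u, F u z - ((xs z.1 + ys z.2 : ℝ) : EReal)) = -c :=
    iInf_sub_eq_neg_conj2 (F u) (hF u) xs ys
  have hFY : ∀ z : X × Y u, ((xs z.1 + ys z.2 : ℝ) : EReal) - F u z ≤ c :=
    fun z => by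
      rw [hcdef]
      exact le_iSup (fun z : X × Y u => ((xs z.1 + ys z.2 : ℝ) : EReal) - F u z) z
  obtain ⟨z₀, hz₀⟩ := hdomF u
  obtain ⟨r₀, hr₀⟩ := exists_real (hF u z₀) hz₀
  have hcbot : c ≠ ⊥ := by
    have h := hFY z₀
    rw [hr₀, ← EReal.coe_sub] at h
    intro hb
    rw [hb, le_bot_iff] at h
    exact EReal.coe_ne_bot _ h
  rcases eq_or_ne c ⊤ with hctop | hcne
  · ext x
    simp only [Sset, Bset, Aset, Jset, M2, epsArgmin, Set.mem_setOf_eq, Set.mem_iUnion]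
    constructor
    · rintro ⟨⟨r, hr⟩, hS⟩
      exfalso
      rw [hr, ← hc, hctop, ← EReal.coe_sub] at hS
      simp only [EReal.neg_top, EReal.bot_add, le_bot_iff] at hS
      exact EReal.coe_ne_bot _ hS
    · rintro ⟨ε₁, ε₂, h1, h2, h3, hJ, ⟨s, hs⟩, hle⟩
      exfalso
      rw [hs, hInf, hctop] at hle
      simp at hle
  · obtain ⟨t, ht⟩ := exists_real hcbot hcne
    ext x
    simp only [Sset, Bset, Aset, Jset, M2, epsArgmin, Set.mem_setOf_eq, Set.mem_iUnion]
    constructor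
    · rintro ⟨⟨r, hr⟩, hS⟩
      rw [hr, ← hc, ht, ← EReal.coe_sub, ← EReal.coe_neg, ← EReal.coe_add,
        EReal.coe_le_coe_iff] at hS
      have hFle : F u (x, 0) ≤ (r : EReal) := hr ▸ le_iSup (fun u' => F u' (x, 0)) u
      have hFYx := hFY (x, 0)
      simp only [map_zero, add_zero] at hFYx
      have hFtop : F u (x, 0) ≠ ⊤ := fun h => by
        rw [h, top_le_iff] at hFle; exact EReal.coe_ne_top _ hFle
      obtain ⟨s, hsx⟩ := exists_real (hF u (x, 0)) hFtop
      rw [hsx, ht, ← EReal.coe_sub, EReal.coe_le_coe_iff] at hFYx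
      rw [hsx, EReal.coe_le_coe_iff] at hFle
      refine ⟨r - s, ε - (r - s), by linarith, by linarith, by ring,
        ⟨⟨r, hr⟩, ?_⟩, ⟨s - xs x, ?_⟩, ?_⟩
      · rw [hr, hsx, ← EReal.coe_add, EReal.coe_le_coe_iff]; linarith
      · simp only [hsx, map_zero, add_zero, ← EReal.coe_sub]
      · rw [hInf, ht]
        simp only [hsx, map_zero, add_zero]
        rw [← EReal.coe_sub, ← EReal.coe_neg, ← EReal.coe_add, EReal.coe_le_coe_iff]
        linarith
    · rintro ⟨ε₁, ε₂, h1, h2, h3, ⟨⟨r, hr⟩, hJ⟩, ⟨s', hs'⟩, hle⟩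
      have hFle : F u (x, 0) ≤ (r : EReal) := hr ▸ le_iSup (fun u' => F u' (x, 0)) u
      have hFtop : F u (x, 0) ≠ ⊤ := fun h => by
        rw [h, top_le_iff] at hFle; exact EReal.coe_ne_top _ hFle
      obtain ⟨s, hsx⟩ := exists_real (hF u (x, 0)) hFtop
      rw [hsx, EReal.coe_le_coe_iff] at hFle
      rw [hr, hsx, ← EReal.coe_add, EReal.coe_le_coe_iff] at hJ
      rw [hInf, ht] at hle
      simp only [hsx, map_zero, add_zero] at hle
      rw [← EReal.coe_sub, ← EReal.coe_neg, ← EReal.coe_add, EReal.coe_le_coe_iff] at hle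
      refine ⟨⟨r, hr⟩, ?_⟩
      rw [hr, ← hc, ht, ← EReal.coe_sub, ← EReal.coe_neg, ← EReal.coe_add,
        EReal.coe_le_coe_iff]
      linarith


end RobustDuality
end
end

section
/- For every ε ≥ 0 and every x ∈ X, the inverse image of x under the set-valued mapping 𝒜^ε, namely {x* ∈ X* : x ∈ 𝒜^ε(x*)}, equals ⋂_{η>0} ⋃_{ε₁,ε₂≥0, ε₁+ε₂=ε+η} ⋃_{u∈I^{ε₁}(x)} proj^u_{X*} ∂^{ε₂}F_u(x, 0_u), where proj^u_{X*} : X* × Y_u* → X* is the projection (x*, y_u*) ↦ x*. -/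
noncomputable section

namespace RobustDuality

variable {X : Type*} [AddCommGroup X] [Module ℝ X] [TopologicalSpace X]
  [IsTopologicalAddGroup X] [ContinuousSMul ℝ X] [LocallyConvexSpace ℝ X] [T2Space X]

variable {U : Type*} {Y : U → Type*} [∀ u, AddCommGroup (Y u)] [∀ u, Module ℝ (Y u)]
  [∀ u, TopologicalSpace (Y u)] [∀ u, IsTopologicalAddGroup (Y u)]
  [∀ u, ContinuousSMul ℝ (Y u)] [∀ u, LocallyConvexSpace ℝ (Y u)] [∀ u, T2Space (Y u)]

lemma coe_le_add_coe_iff' (b : EReal) (s e : ℝ) :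
    (s : EReal) ≤ b + (e : EReal) ↔ ((s - e : ℝ) : EReal) ≤ b := by
  induction b using EReal.rec with
  | bot => simp [← EReal.coe_sub, EReal.coe_ne_bot]
  | coe r =>
    rw [← EReal.coe_add, EReal.coe_le_coe_iff, EReal.coe_le_coe_iff]
    constructor <;> intro <;> linarith
  | top => simp

lemma coe_le_sub_coe_iff' (a : EReal) (r q : ℝ) :
    (r : EReal) ≤ a - (q : EReal) ↔ ((r + q : ℝ) : EReal) ≤ a := by
  induction a using EReal.rec with
  | bot => simp [EReal.bot_sub]
  | coe s =>
    rw [← EReal.coe_sub, EReal.coe_le_coe_iff, EReal.coe_le_coe_iff]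
    constructor <;> intro <;> linarith
  | top => simp [EReal.top_sub_coe]

lemma exists_coe_of_le_coe' {a : EReal} {r : ℝ} (h : a ≤ (r : EReal)) (h' : a ≠ ⊥) :
    ∃ s : ℝ, a = (s : EReal) := by
  lift a to ℝ using ⟨(h.trans_lt (EReal.coe_lt_top r)).ne, h'⟩
  exact ⟨a, rfl⟩

lemma mem_Aset_iff (F : ∀ u, X × Y u → EReal) (hF : ∀ u z, F u z ≠ ⊥)
    (ε₁ ε₂ : ℝ) (u : U) (ys : Y u →L[ℝ] ℝ) (xs : X →L[ℝ] ℝ) (x : X) :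
    x ∈ Aset F ε₁ ε₂ u ys xs ↔
      u ∈ Iset F ε₁ x ∧ (xs, ys) ∈ epsSubdiff2 (F u) ε₂ (x, (0 : Y u)) := by
  by_cases hp : ∃ r : ℝ, pRob F x = (r : EReal)
  · obtain ⟨r, hr⟩ := hp
    have hFle : F u (x, 0) ≤ (r : EReal) := by
      rw [← hr]; exact le_iSup (fun u => F u (x, 0)) u
    obtain ⟨s, hs⟩ := exists_coe_of_le_coe' hFle (hF u _)
    have h1 : x ∈ Jset F ε₁ u ↔ u ∈ Iset F ε₁ x := by
      simp only [Jset, Iset, Set.mem_setOf_eq, hr, hs, ← EReal.coe_add, ← EReal.coe_sub,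
        EReal.coe_le_coe_iff]
      exact and_congr_right fun _ => ⟨fun h => by linarith, fun h => by linarith⟩
    have h2 : (x, (0 : Y u)) ∈ M2 (F u) ε₂ xs ys ↔
        (xs, ys) ∈ epsSubdiff2 (F u) ε₂ (x, (0 : Y u)) := by
      simp only [M2, epsArgmin, epsSubdiff2, Set.mem_setOf_eq, hs, map_zero, add_zero,
        ← EReal.coe_sub]
      constructor
      · rintro ⟨-, h⟩
        refine ⟨⟨s, rfl⟩, fun z => ?_⟩
        rw [coe_le_add_coe_iff', le_iInf_iff] at h
        have := h z
        rw [coe_le_sub_coe_iff'] at this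
        rw [← EReal.coe_add]
        refine le_trans (le_of_eq ?_) this
        norm_cast
        ring
      · rintro ⟨-, h⟩
        refine ⟨⟨s - (xs x + ys 0), by rw [map_zero, add_zero]⟩, ?_⟩
        rw [coe_le_add_coe_iff', le_iInf_iff]
        intro z
        rw [coe_le_sub_coe_iff']
        have := h z
        rw [← EReal.coe_add] at this
        refine le_trans (le_of_eq ?_) this
        norm_cast
        ring
    simp only [Aset, Set.mem_setOf_eq]
    rw [h1, h2]
  · constructor
    · rintro ⟨⟨h, -⟩, -⟩; exact absurd h hp
    · rintro ⟨⟨h, -⟩, -⟩; exact absurd h hp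

/-- Lemma 6.1: the inverse image of `x` under `𝒜^ε` is `C^ε(x)`. -/
theorem calA_inv_eq_Cset
    (F : ∀ u, X × Y u → EReal) (hU : Nonempty U) (hF : ∀ u z, F u z ≠ ⊥)
    (ε : ℝ) (hε : 0 ≤ ε) (x : X) :
    {xs : X →L[ℝ] ℝ | x ∈ calA F ε xs} = Cset F ε x := by
  ext xs
  simp only [Set.mem_setOf_eq, calA, Cset, Set.mem_iInter, Set.mem_iUnion]
  constructor
  · intro h η hη
    obtain ⟨u, ys, ε₁, ε₂, h1, h2, h3, hx⟩ := h η hη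
    rw [mem_Aset_iff F hF] at hx
    exact ⟨ε₁, ε₂, h1, h2, h3, u, hx.1, (xs, ys), hx.2, rfl⟩
  · intro h η hη
    obtain ⟨ε₁, ε₂, h1, h2, h3, u, hu, zs, hzs, hfst⟩ := h η hη
    refine ⟨u, zs.2, ε₁, ε₂, h1, h2, h3, ?_⟩
    rw [mem_Aset_iff F hF]
    have hz : zs = (xs, zs.2) := by rw [← hfst]
    exact ⟨hu, hz ▸ hzs⟩

end RobustDuality
end
end
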